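/- If an elementary existential doctrine P has full comprehensions, then every object ⟨A,ρ⟩ of the exact completion T_P is isomorphic in T_P to an object ⟨X,ρ'⟩ with ρ' a P-equivalence relation on X; hence the inclusion E_P ↪ T_P is an equivalence of categories. Here X is the domain of the comprehension of P_{⟨id,id⟩}(ρ) ∈ P(A). -/

import Mathlib

open CategoryTheory CategoryTheory.Limits

universe u v w

/-- Layer 0: an indexed family of inf-semilattices over a category. -/
structure DocL0 (C : Type u) [Category.{v} C] where
  obj : C → Type w
  semi : ∀ A : C, SemilatticeInf (obj A)

attribute [instance] DocL0.semi

/-- Layer 1: fibrewise top elements. -/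
structure DocL1 (C : Type u) [Category.{v} C] extends DocL0.{u, v, w} C where
  otop : ∀ A : C, OrderTop (obj A)

attribute [instance] DocL1.otop

/-- A doctrine: an indexed inf-semilattice `P : Cᵒᵖ → InfSL`. -/
structure Doctrine (C : Type u) [Category.{v} C] extends DocL1.{u, v, w} C where
  map : ∀ {A B : C}, (A ⟶ B) → obj B → obj A
  map_id : ∀ (A : C) (x : obj A), map (𝟙 A) x = x
  map_comp : ∀ {A B D : C} (f : A ⟶ B) (g : B ⟶ D) (x : obj D),
    map (f ≫ g) x = map f (map g x)
  map_mono : ∀ {A B : C} (f : A ⟶ B), Monotone (map f)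
  map_inf : ∀ {A B : C} (f : A ⟶ B) (x y : obj B),
    map f (x ⊓ y) = map f x ⊓ map f y
  map_top : ∀ {A B : C} (f : A ⟶ B), map f (⊤ : obj B) = (⊤ : obj A)

/-- An elementary existential doctrine. -/
structure EED (C : Type u) [Category.{v} C] [HasBinaryProducts C] extends
    Doctrine.{u, v, w} C where
  delta : ∀ A : C, obj (A ⨯ A)
  elem_i : ∀ {A : C} (α : obj A) (β : obj (A ⨯ A)),
    map prod.fst α ⊓ delta A ≤ β ↔ α ≤ map (diag A) β
  elem_ii : ∀ {X A : C} (α : obj (X ⨯ A)) (β : obj ((X ⨯ A) ⨯ A)),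
    map prod.fst α ⊓ map (prod.lift (prod.fst ≫ prod.snd) prod.snd) (delta A) ≤ β ↔
      α ≤ map (prod.lift (𝟙 (X ⨯ A)) prod.snd) β
  ex : ∀ {A B : C}, (A ⟶ B) → obj A → obj B
  ex_adj : ∀ {A B : C} (f : A ⟶ B) (α : obj A) (β : obj B),
    ex f α ≤ β ↔ α ≤ map f β
  frobenius : ∀ {A B : C} (f : A ⟶ B) (α : obj B) (β : obj A),
    ex f (map f α ⊓ β) = α ⊓ ex f β
  beck_chevalley : ∀ {A A' B : C} (f : A' ⟶ A) (β : obj (A ⨯ B)),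
    ex prod.fst (map (prod.map f (𝟙 B)) β) = map f (ex prod.fst β)

namespace EED

variable {C : Type u} [Category.{v} C] [HasBinaryProducts C] (P : EED.{u, v, w} C)

/-- Relational composition `∃_{p₂}(P_{⟨p₁,p₂⟩}(θ) ∧ P_{⟨p₂,p₃⟩}(ζ))`. -/
noncomputable def comp {A B D : C} (θ : P.obj (A ⨯ B)) (ζ : P.obj (B ⨯ D)) : P.obj (A ⨯ D) :=
  P.ex (prod.lift (prod.fst ≫ prod.fst) prod.snd)
    (P.map prod.fst θ ⊓ P.map (prod.lift (prod.fst ≫ prod.snd) prod.snd) ζ)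

/-- Opposite relation `P_{⟨p₂,p₁⟩}(θ)`. -/
noncomputable def op {A B : C} (θ : P.obj (A ⨯ B)) : P.obj (B ⨯ A) :=
  P.map (prod.lift prod.snd prod.fst) θ

/-- `ρ ≤ P_{⟨p₂,p₁⟩}(ρ)`. -/
def SymmRel {A : C} (ρ : P.obj (A ⨯ A)) : Prop :=
  ρ ≤ P.map (prod.lift prod.snd prod.fst) ρ

/-- `P_{⟨p₁,p₂⟩}(ρ) ∧ P_{⟨p₂,p₃⟩}(ρ) ≤ P_{⟨p₁,p₃⟩}(ρ)` in `P((A×A)×A)`. -/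
def TransRel {A : C} (ρ : P.obj (A ⨯ A)) : Prop :=
  P.map prod.fst ρ ⊓ P.map (prod.lift (prod.fst ≫ prod.snd) prod.snd) ρ ≤
    P.map (prod.lift (prod.fst ≫ prod.fst) prod.snd) ρ

/-- `δ_A ≤ ρ`. -/
def ReflRel {A : C} (ρ : P.obj (A ⨯ A)) : Prop := P.delta A ≤ ρ

/-- A `P`-equivalence relation. -/
def EqRel {A : C} (ρ : P.obj (A ⨯ A)) : Prop :=
  P.ReflRel ρ ∧ P.SymmRel ρ ∧ P.TransRel ρ

/-- Conditions (i)–(v) for an arrow `φ : ⟨A,ρ⟩ → ⟨B,σ⟩` of the exact completion `T_P`. -/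
def IsArrow {A B : C} (ρ : P.obj (A ⨯ A)) (σ : P.obj (B ⨯ B)) (φ : P.obj (A ⨯ B)) : Prop :=
  (φ ≤ P.map (prod.lift prod.fst prod.fst) ρ ⊓ P.map (prod.lift prod.snd prod.snd) σ) ∧
  (P.map prod.fst ρ ⊓ P.map (prod.lift (prod.fst ≫ prod.snd) prod.snd) φ ≤
      P.map (prod.lift (prod.fst ≫ prod.fst) prod.snd) φ) ∧
  (P.map prod.fst φ ⊓ P.map (prod.lift (prod.fst ≫ prod.snd) prod.snd) σ ≤
      P.map (prod.lift (prod.fst ≫ prod.fst) prod.snd) φ) ∧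
  (P.map prod.fst φ ⊓ P.map (prod.lift (prod.fst ≫ prod.fst) prod.snd) φ ≤
      P.map (prod.lift (prod.fst ≫ prod.snd) prod.snd) σ) ∧
  (P.map (diag A) ρ ≤ P.ex prod.fst φ)

/-- The graph relation `L[f] = ∃_{p₂}(P_{⟨p₁,p₂⟩}(ρ) ∧ P_{⟨f∘p₂,p₃⟩}(σ))` in `P(A×B)`. -/
noncomputable def Lrel {A B : C} (f : A ⟶ B) (ρ : P.obj (A ⨯ A)) (σ : P.obj (B ⨯ B)) : P.obj (A ⨯ B) :=
  P.ex (prod.lift (prod.fst ≫ prod.fst) prod.snd)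
    (P.map prod.fst ρ ⊓ P.map (prod.lift (prod.fst ≫ prod.snd ≫ f) prod.snd) σ)

end EED

attribute [simp] prod.lift_fst prod.lift_snd prod.lift_fst_assoc prod.lift_snd_assoc

section Aux

variable {C : Type u} [Category.{v} C] [HasBinaryProducts C] (P : EED.{u, v, w} C)

lemma EED.map_map {X Y Z : C} (f : X ⟶ Y) (g : Y ⟶ Z) (x : P.obj Z) :
    P.map f (P.map g x) = P.map (f ≫ g) x := (P.map_comp f g x).symm

lemma EED.ex_mono {X Y : C} (f : X ⟶ Y) {a b : P.obj X} (h : a ≤ b) :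
    P.ex f a ≤ P.ex f b :=
  (P.ex_adj f a _).2 (h.trans ((P.ex_adj f b _).1 le_rfl))

lemma EED.unit {X Y : C} (f : X ⟶ Y) (a : P.obj X) : a ≤ P.map f (P.ex f a) :=
  (P.ex_adj f a _).1 le_rfl

variable {A : C} {ρ : P.obj (A ⨯ A)}

lemma EED.symm2 (hs : P.SymmRel ρ) {Z : C} (u v : Z ⟶ A) :
    P.map (prod.lift u v) ρ ≤ P.map (prod.lift v u) ρ := by
  have h := P.map_mono (prod.lift u v) hs
  rw [P.map_map] at h
  have e : prod.lift u v ≫ prod.lift prod.snd prod.fst = prod.lift v u := by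
    ext <;> simp
  rwa [e] at h

lemma EED.trans3 (ht : P.TransRel ρ) {Z : C} (u v w : Z ⟶ A) :
    P.map (prod.lift u v) ρ ⊓ P.map (prod.lift v w) ρ ≤ P.map (prod.lift u w) ρ := by
  have h := P.map_mono (prod.lift (prod.lift u v) w) ht
  rw [P.map_inf, P.map_map, P.map_map, P.map_map] at h
  have e1 : prod.lift (prod.lift u v) w ≫ prod.fst = prod.lift u v := by simp
  have e2 : prod.lift (prod.lift u v) w ≫ prod.lift (prod.fst ≫ prod.snd) prod.snd
      = prod.lift v w := by ext <;> simp
  have e3 : prod.lift (prod.lift u v) w ≫ prod.lift (prod.fst ≫ prod.fst) prod.snd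
      = prod.lift u w := by ext <;> simp
  rwa [e1, e2, e3] at h

lemma EED.refl_left (hs : P.SymmRel ρ) (ht : P.TransRel ρ) {Z : C} (u v : Z ⟶ A) :
    P.map (prod.lift u v) ρ ≤ P.map (prod.lift u u) ρ :=
  le_trans (le_inf le_rfl (P.symm2 hs u v)) (P.trans3 ht u v u)

lemma EED.refl_right (hs : P.SymmRel ρ) (ht : P.TransRel ρ) {Z : C} (u v : Z ⟶ A) :
    P.map (prod.lift u v) ρ ≤ P.map (prod.lift v v) ρ :=
  le_trans (le_inf (P.symm2 hs u v) le_rfl) (P.trans3 ht v u v)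

lemma EED.ex_cm_top {A : C}
    (cob : ∀ {A : C}, P.obj A → C) (cm : ∀ {A : C} (α : P.obj A), cob α ⟶ A)
    (hc_top : ∀ {A : C} (α : P.obj A), P.map (cm α) α = ⊤)
    (hc_univ : ∀ {A : C} (α : P.obj A) {Z : C} (f : Z ⟶ A),
      P.map f α = ⊤ → ∃! g : Z ⟶ cob α, g ≫ cm α = f)
    (hc_full : ∀ {A : C} (α β : P.obj A) (k : cob α ⟶ cob β),
      k ≫ cm β = cm α → α ≤ β)
    (α : P.obj A) : P.ex (cm α) ⊤ = α := by
  apply le_antisymm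
  · exact (P.ex_adj _ _ _).2 (by rw [hc_top])
  · have hβ : P.map (cm α) (P.ex (cm α) (⊤ : P.obj (cob α))) = ⊤ :=
      top_le_iff.1 (P.unit (cm α) ⊤)
    obtain ⟨k, hk, -⟩ := hc_univ (P.ex (cm α) ⊤) (cm α) hβ
    exact hc_full α _ k hk

end Aux
set_option maxHeartbeats 1000000 in
/-- if `P` has full comprehensions then every object `⟨A,ρ⟩` of
`T_P` is isomorphic in `T_P` to an object `⟨X,ρ'⟩` with `ρ'` a `P`-equivalence
relation, where `X` is the domain of the comprehension of `P_{⟨id,id⟩}(ρ)`;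
hence the inclusion `E_P ↪ T_P` is an equivalence. -/
theorem EP_equivalent_TP_of_full_comprehensions
    {C : Type u} [Category.{v} C] [HasBinaryProducts C] (P : EED.{u, v, w} C)
    (cob : ∀ {A : C}, P.obj A → C) (cm : ∀ {A : C} (α : P.obj A), cob α ⟶ A)
    (hc_top : ∀ {A : C} (α : P.obj A), P.map (cm α) α = ⊤)
    (hc_univ : ∀ {A : C} (α : P.obj A) {Z : C} (f : Z ⟶ A),
      P.map f α = ⊤ → ∃! g : Z ⟶ cob α, g ≫ cm α = f)
    (hc_full : ∀ {A : C} (α β : P.obj A) (k : cob α ⟶ cob β),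
      k ≫ cm β = cm α → α ≤ β)
    {A : C} (ρ : P.obj (A ⨯ A)) (hρ : P.SymmRel ρ ∧ P.TransRel ρ) :
    letI c : cob (P.map (diag A) ρ) ⟶ A := cm (P.map (diag A) ρ)
    letI ρ' := P.map (prod.map c c) ρ
    P.EqRel ρ' ∧
    ∃ (φ : P.obj (A ⨯ cob (P.map (diag A) ρ)))
      (ψ : P.obj (cob (P.map (diag A) ρ) ⨯ A)),
      P.IsArrow ρ ρ' φ ∧ P.IsArrow ρ' ρ ψ ∧
      P.comp φ ψ = ρ ∧ P.comp ψ φ = ρ' := by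
  obtain ⟨hs, ht⟩ := hρ
  set α : P.obj A := P.map (diag A) ρ with hαdef
  set c : cob α ⟶ A := cm α with hcdef
  set ρ' : P.obj (cob α ⨯ cob α) := P.map (prod.map c c) ρ with hρ'def
  have hcα : P.map c α = ⊤ := hc_top α
  have hρ'n : ρ' = P.map (prod.lift (prod.fst ≫ c) (prod.snd ≫ c)) ρ := by
    rw [hρ'def]; congr 1; ext <;> simp
  have hφn : P.map (prod.map (𝟙 A) c) ρ = P.map (prod.lift prod.fst (prod.snd ≫ c)) ρ := by
    congr 1; ext <;> simp
  have hψn : P.map (prod.map c (𝟙 A)) ρ = P.map (prod.lift (prod.fst ≫ c) prod.snd) ρ := by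
    congr 1; ext <;> simp
  have hdiagX : P.map (diag (cob α)) ρ' = ⊤ := by
    rw [hρ'def, P.map_map]
    have e : diag (cob α) ≫ prod.map c c = c ≫ diag A := by ext <;> simp [diag]
    rw [e, ← P.map_map, ← hαdef, hcα]
  have hrefl : P.ReflRel ρ' := by
    have h := (P.elem_i (⊤ : P.obj (cob α)) ρ').2 (le_of_eq hdiagX.symm)
    rwa [P.map_top, top_inf_eq] at h
  have hsymm : P.SymmRel ρ' := by
    show ρ' ≤ P.map (prod.lift prod.snd prod.fst) ρ'
    rw [hρ'n, P.map_map]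
    have e : (prod.lift prod.snd prod.fst : cob α ⨯ cob α ⟶ cob α ⨯ cob α) ≫ prod.lift (prod.fst ≫ c) (prod.snd ≫ c)
        = prod.lift (prod.snd ≫ c) (prod.fst ≫ c) := by ext <;> simp
    rw [e]
    exact P.symm2 hs _ _
  have htrans : P.TransRel ρ' := by
    show P.map prod.fst ρ' ⊓ P.map (prod.lift (prod.fst ≫ prod.snd) prod.snd) ρ' ≤
      P.map (prod.lift (prod.fst ≫ prod.fst) prod.snd) ρ'
    rw [hρ'n]
    simp only [P.map_map]
    have e1 : (prod.fst : (cob α ⨯ cob α) ⨯ cob α ⟶ cob α ⨯ cob α) ≫ prod.lift (prod.fst ≫ c) (prod.snd ≫ c)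
        = prod.lift (prod.fst ≫ prod.fst ≫ c) (prod.fst ≫ prod.snd ≫ c) := by ext <;> simp
    have e2 : (prod.lift (prod.fst ≫ prod.snd) prod.snd : (cob α ⨯ cob α) ⨯ cob α ⟶ cob α ⨯ cob α) ≫ prod.lift (prod.fst ≫ c) (prod.snd ≫ c)
        = prod.lift (prod.fst ≫ prod.snd ≫ c) (prod.snd ≫ c) := by ext <;> simp
    have e3 : (prod.lift (prod.fst ≫ prod.fst) prod.snd : (cob α ⨯ cob α) ⨯ cob α ⟶ cob α ⨯ cob α) ≫ prod.lift (prod.fst ≫ c) (prod.snd ≫ c)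
        = prod.lift (prod.fst ≫ prod.fst ≫ c) (prod.snd ≫ c) := by ext <;> simp
    rw [e1, e2, e3]
    exact P.trans3 ht _ _ _
  -- IsArrow ρ ρ' φ
  have hφ1 : P.map (prod.map (𝟙 A) c) ρ ≤
      P.map (prod.lift prod.fst prod.fst) ρ ⊓ P.map (prod.lift prod.snd prod.snd) ρ' := by
    refine le_inf ?_ ?_
    · rw [hφn]; exact P.refl_left hs ht _ _
    · rw [hφn, hρ'n, P.map_map]
      have e : (prod.lift prod.snd prod.snd : A ⨯ cob α ⟶ cob α ⨯ cob α) ≫ prod.lift (prod.fst ≫ c) (prod.snd ≫ c)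
          = prod.lift (prod.snd ≫ c) (prod.snd ≫ c) := by ext <;> simp
      rw [e]; exact P.refl_right hs ht _ _
  have hφ2 : P.map prod.fst ρ ⊓
      P.map (prod.lift (prod.fst ≫ prod.snd) prod.snd) (P.map (prod.map (𝟙 A) c) ρ) ≤
      P.map (prod.lift (prod.fst ≫ prod.fst) prod.snd) (P.map (prod.map (𝟙 A) c) ρ) := by
    rw [hφn]
    simp only [P.map_map]
    have e0 : P.map (prod.fst : (A ⨯ A) ⨯ cob α ⟶ A ⨯ A) ρ
        = P.map (prod.lift (prod.fst ≫ prod.fst) (prod.fst ≫ prod.snd)) ρ := by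
      congr 1; ext <;> simp
    have e2 : (prod.lift (prod.fst ≫ prod.snd) prod.snd : (A ⨯ A) ⨯ cob α ⟶ A ⨯ cob α) ≫ prod.lift prod.fst (prod.snd ≫ c)
        = prod.lift (prod.fst ≫ prod.snd) (prod.snd ≫ c) := by ext <;> simp
    have e3 : (prod.lift (prod.fst ≫ prod.fst) prod.snd : (A ⨯ A) ⨯ cob α ⟶ A ⨯ cob α) ≫ prod.lift prod.fst (prod.snd ≫ c)
        = prod.lift (prod.fst ≫ prod.fst) (prod.snd ≫ c) := by ext <;> simp
    rw [e0, e2, e3]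
    exact P.trans3 ht _ _ _
  have hφ3 : P.map prod.fst (P.map (prod.map (𝟙 A) c) ρ) ⊓
      P.map (prod.lift (prod.fst ≫ prod.snd) prod.snd) ρ' ≤
      P.map (prod.lift (prod.fst ≫ prod.fst) prod.snd) (P.map (prod.map (𝟙 A) c) ρ) := by
    rw [hφn, hρ'n]
    simp only [P.map_map]
    have e1 : (prod.fst : (A ⨯ cob α) ⨯ cob α ⟶ A ⨯ cob α) ≫ prod.lift prod.fst (prod.snd ≫ c)
        = prod.lift (prod.fst ≫ prod.fst) (prod.fst ≫ prod.snd ≫ c) := by ext <;> simp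
    have e2 : (prod.lift (prod.fst ≫ prod.snd) prod.snd : (A ⨯ cob α) ⨯ cob α ⟶ cob α ⨯ cob α) ≫ prod.lift (prod.fst ≫ c) (prod.snd ≫ c)
        = prod.lift (prod.fst ≫ prod.snd ≫ c) (prod.snd ≫ c) := by ext <;> simp
    have e3 : (prod.lift (prod.fst ≫ prod.fst) prod.snd : (A ⨯ cob α) ⨯ cob α ⟶ A ⨯ cob α) ≫ prod.lift prod.fst (prod.snd ≫ c)
        = prod.lift (prod.fst ≫ prod.fst) (prod.snd ≫ c) := by ext <;> simp
    rw [e1, e2, e3]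
    exact P.trans3 ht _ _ _
  have hφ4 : P.map prod.fst (P.map (prod.map (𝟙 A) c) ρ) ⊓
      P.map (prod.lift (prod.fst ≫ prod.fst) prod.snd) (P.map (prod.map (𝟙 A) c) ρ) ≤
      P.map (prod.lift (prod.fst ≫ prod.snd) prod.snd) ρ' := by
    rw [hφn, hρ'n]
    simp only [P.map_map]
    have e1 : (prod.fst : (A ⨯ cob α) ⨯ cob α ⟶ A ⨯ cob α) ≫ prod.lift prod.fst (prod.snd ≫ c)
        = prod.lift (prod.fst ≫ prod.fst) (prod.fst ≫ prod.snd ≫ c) := by ext <;> simp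
    have e2 : (prod.lift (prod.fst ≫ prod.fst) prod.snd : (A ⨯ cob α) ⨯ cob α ⟶ A ⨯ cob α) ≫ prod.lift prod.fst (prod.snd ≫ c)
        = prod.lift (prod.fst ≫ prod.fst) (prod.snd ≫ c) := by ext <;> simp
    have e3 : (prod.lift (prod.fst ≫ prod.snd) prod.snd : (A ⨯ cob α) ⨯ cob α ⟶ cob α ⨯ cob α) ≫ prod.lift (prod.fst ≫ c) (prod.snd ≫ c)
        = prod.lift (prod.fst ≫ prod.snd ≫ c) (prod.snd ≫ c) := by ext <;> simp
    rw [e1, e2, e3]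
    exact le_trans (inf_le_inf (P.symm2 hs _ _) le_rfl) (P.trans3 ht _ _ _)
  have hφ5 : α ≤ P.ex prod.fst (P.map (prod.map (𝟙 A) c) ρ) := by
    refine le_trans (le_of_eq (P.ex_cm_top cob cm hc_top hc_univ hc_full α).symm) ?_
    refine (P.ex_adj _ _ _).2 ?_
    rw [← hcdef, ← P.beck_chevalley c (P.map (prod.map (𝟙 A) c) ρ)]
    have e : P.map (prod.map c (𝟙 (cob α))) (P.map (prod.map (𝟙 A) c) ρ) = ρ' := by
      rw [P.map_map, hρ'def]; congr 1; ext <;> simp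
    rw [e]
    have h1 : (⊤ : P.obj (cob α)) ≤ P.ex prod.fst (P.delta (cob α)) := by
      have h2 : P.map prod.fst (⊤ : P.obj (cob α)) ⊓ P.delta (cob α) ≤
          P.map prod.fst (P.ex prod.fst (P.delta (cob α))) := by
        rw [P.map_top, top_inf_eq]; exact P.unit _ _
      have h3 := (P.elem_i _ _).1 h2
      have e4 : diag (cob α) ≫ (prod.fst : cob α ⨯ cob α ⟶ cob α) = 𝟙 (cob α) := by
        simp [diag]
      rwa [P.map_map, e4, P.map_id] at h3
    exact le_trans h1 (P.ex_mono _ hrefl)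
  -- IsArrow ρ' ρ ψ
  have hψ1 : P.map (prod.map c (𝟙 A)) ρ ≤
      P.map (prod.lift prod.fst prod.fst) ρ' ⊓ P.map (prod.lift prod.snd prod.snd) ρ := by
    refine le_inf ?_ ?_
    · rw [hψn, hρ'n, P.map_map]
      have e : (prod.lift prod.fst prod.fst : cob α ⨯ A ⟶ cob α ⨯ cob α) ≫ prod.lift (prod.fst ≫ c) (prod.snd ≫ c)
          = prod.lift (prod.fst ≫ c) (prod.fst ≫ c) := by ext <;> simp
      rw [e]; exact P.refl_left hs ht _ _
    · rw [hψn]; exact P.refl_right hs ht _ _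
  have hψ2 : P.map prod.fst ρ' ⊓
      P.map (prod.lift (prod.fst ≫ prod.snd) prod.snd) (P.map (prod.map c (𝟙 A)) ρ) ≤
      P.map (prod.lift (prod.fst ≫ prod.fst) prod.snd) (P.map (prod.map c (𝟙 A)) ρ) := by
    rw [hψn, hρ'n]
    simp only [P.map_map]
    have e1 : (prod.fst : (cob α ⨯ cob α) ⨯ A ⟶ cob α ⨯ cob α) ≫
        prod.lift (prod.fst ≫ c) (prod.snd ≫ c)
        = prod.lift (prod.fst ≫ prod.fst ≫ c) (prod.fst ≫ prod.snd ≫ c) := by ext <;> simp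
    have e2 : (prod.lift (prod.fst ≫ prod.snd) prod.snd : (cob α ⨯ cob α) ⨯ A ⟶ cob α ⨯ A) ≫ prod.lift (prod.fst ≫ c) prod.snd
        = prod.lift (prod.fst ≫ prod.snd ≫ c) prod.snd := by ext <;> simp
    have e3 : (prod.lift (prod.fst ≫ prod.fst) prod.snd : (cob α ⨯ cob α) ⨯ A ⟶ cob α ⨯ A) ≫ prod.lift (prod.fst ≫ c) prod.snd
        = prod.lift (prod.fst ≫ prod.fst ≫ c) prod.snd := by ext <;> simp
    rw [e1, e2, e3]
    exact P.trans3 ht _ _ _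
  have hψ3 : P.map prod.fst (P.map (prod.map c (𝟙 A)) ρ) ⊓
      P.map (prod.lift (prod.fst ≫ prod.snd) prod.snd) ρ ≤
      P.map (prod.lift (prod.fst ≫ prod.fst) prod.snd) (P.map (prod.map c (𝟙 A)) ρ) := by
    rw [hψn]
    simp only [P.map_map]
    have e1 : (prod.fst : (cob α ⨯ A) ⨯ A ⟶ cob α ⨯ A) ≫ prod.lift (prod.fst ≫ c) prod.snd
        = prod.lift (prod.fst ≫ prod.fst ≫ c) (prod.fst ≫ prod.snd) := by ext <;> simp
    have e3 : (prod.lift (prod.fst ≫ prod.fst) prod.snd : (cob α ⨯ A) ⨯ A ⟶ cob α ⨯ A) ≫ prod.lift (prod.fst ≫ c) prod.snd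
        = prod.lift (prod.fst ≫ prod.fst ≫ c) prod.snd := by ext <;> simp
    rw [e1, e3]
    exact P.trans3 ht _ _ _
  have hψ4 : P.map prod.fst (P.map (prod.map c (𝟙 A)) ρ) ⊓
      P.map (prod.lift (prod.fst ≫ prod.fst) prod.snd) (P.map (prod.map c (𝟙 A)) ρ) ≤
      P.map (prod.lift (prod.fst ≫ prod.snd) prod.snd) ρ := by
    rw [hψn]
    simp only [P.map_map]
    have e1 : (prod.fst : (cob α ⨯ A) ⨯ A ⟶ cob α ⨯ A) ≫ prod.lift (prod.fst ≫ c) prod.snd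
        = prod.lift (prod.fst ≫ prod.fst ≫ c) (prod.fst ≫ prod.snd) := by ext <;> simp
    have e2 : (prod.lift (prod.fst ≫ prod.fst) prod.snd : (cob α ⨯ A) ⨯ A ⟶ cob α ⨯ A) ≫ prod.lift (prod.fst ≫ c) prod.snd
        = prod.lift (prod.fst ≫ prod.fst ≫ c) prod.snd := by ext <;> simp
    rw [e1, e2]
    exact le_trans (inf_le_inf (P.symm2 hs _ _) le_rfl) (P.trans3 ht _ _ _)
  have hψ5 : P.map (diag (cob α)) ρ' ≤ P.ex prod.fst (P.map (prod.map c (𝟙 A)) ρ) := by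
    refine le_trans (le_of_eq hdiagX) ?_
    rw [P.beck_chevalley c ρ]
    have h4 : P.map (diag A) ρ ≤ P.ex prod.fst ρ := by
      have h5 := P.map_mono (diag A) (P.unit prod.fst ρ)
      have e4 : diag A ≫ (prod.fst : A ⨯ A ⟶ A) = 𝟙 A := by simp [diag]
      rwa [P.map_map, e4, P.map_id] at h5
    calc (⊤ : P.obj (cob α)) = P.map c α := hcα.symm
      _ = P.map c (P.map (diag A) ρ) := rfl
      _ ≤ P.map c (P.ex prod.fst ρ) := P.map_mono c h4
  -- comp φ ψ = ρ
  have hcomp1 : P.comp (P.map (prod.map (𝟙 A) c) ρ) (P.map (prod.map c (𝟙 A)) ρ) = ρ := by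
    show P.ex (prod.lift (prod.fst ≫ prod.fst) prod.snd)
        (P.map prod.fst (P.map (prod.map (𝟙 A) c) ρ) ⊓
         P.map (prod.lift (prod.fst ≫ prod.snd) prod.snd) (P.map (prod.map c (𝟙 A)) ρ)) = ρ
    set Γ : P.obj ((A ⨯ cob α) ⨯ A) :=
      P.map prod.fst (P.map (prod.map (𝟙 A) c) ρ) ⊓
        P.map (prod.lift (prod.fst ≫ prod.snd) prod.snd) (P.map (prod.map c (𝟙 A)) ρ) with hΓ
    apply le_antisymm
    · refine (P.ex_adj _ _ _).2 ?_
      rw [hΓ, hφn, hψn]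
      simp only [P.map_map]
      have e1 : (prod.fst : (A ⨯ cob α) ⨯ A ⟶ A ⨯ cob α) ≫ prod.lift prod.fst (prod.snd ≫ c)
          = prod.lift (prod.fst ≫ prod.fst) (prod.fst ≫ prod.snd ≫ c) := by ext <;> simp
      have e2 : (prod.lift (prod.fst ≫ prod.snd) prod.snd :
            (A ⨯ cob α) ⨯ A ⟶ cob α ⨯ A) ≫ prod.lift (prod.fst ≫ c) prod.snd
          = prod.lift (prod.fst ≫ prod.snd ≫ c) prod.snd := by ext <;> simp
      rw [e1, e2]
      exact P.trans3 ht _ _ _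
    · have hdρ : P.map (cm ρ) ρ = ⊤ := hc_top ρ
      have hdn : P.map (cm ρ) ρ = P.map (prod.lift (cm ρ ≫ prod.fst) (cm ρ ≫ prod.snd)) ρ := by
        congr 1; ext <;> simp
      have hg : P.map (cm ρ ≫ prod.fst) α = ⊤ := by
        rw [hαdef, P.map_map]
        have e : (cm ρ ≫ prod.fst) ≫ diag A
            = prod.lift (cm ρ ≫ prod.fst) (cm ρ ≫ prod.fst) := by ext <;> simp [diag]
        rw [e]
        refine top_le_iff.1 ?_
        calc (⊤ : P.obj (cob ρ)) = P.map (cm ρ) ρ := hdρ.symm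
          _ = P.map (prod.lift (cm ρ ≫ prod.fst) (cm ρ ≫ prod.snd)) ρ := hdn
          _ ≤ _ := P.refl_left hs ht _ _
      obtain ⟨g, hgc, -⟩ := hc_univ α (cm ρ ≫ prod.fst) hg
      have hgc' : g ≫ c = cm ρ ≫ prod.fst := by rw [hcdef]; exact hgc
      set t : cob ρ ⟶ (A ⨯ cob α) ⨯ A :=
        prod.lift (prod.lift (cm ρ ≫ prod.fst) g) (cm ρ ≫ prod.snd) with htdef
      have ht1 : P.map t (P.map prod.fst (P.map (prod.map (𝟙 A) c) ρ)) = ⊤ := by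
        rw [hφn]
        simp only [P.map_map]
        have e : t ≫ ((prod.fst : (A ⨯ cob α) ⨯ A ⟶ A ⨯ cob α) ≫
              prod.lift prod.fst (prod.snd ≫ c))
            = prod.lift (cm ρ ≫ prod.fst) (cm ρ ≫ prod.fst) := by
          rw [htdef]; ext <;> simp [hgc']
        rw [e]
        refine top_le_iff.1 ?_
        calc (⊤ : P.obj (cob ρ)) = P.map (cm ρ) ρ := hdρ.symm
          _ = P.map (prod.lift (cm ρ ≫ prod.fst) (cm ρ ≫ prod.snd)) ρ := hdn
          _ ≤ _ := P.refl_left hs ht _ _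
      have ht2 : P.map t (P.map (prod.lift (prod.fst ≫ prod.snd) prod.snd)
          (P.map (prod.map c (𝟙 A)) ρ)) = ⊤ := by
        rw [hψn]
        simp only [P.map_map]
        have e : t ≫ ((prod.lift (prod.fst ≫ prod.snd) prod.snd :
              (A ⨯ cob α) ⨯ A ⟶ cob α ⨯ A) ≫ prod.lift (prod.fst ≫ c) prod.snd)
            = cm ρ := by
          rw [htdef]; ext <;> simp [hgc']
        rw [e, hdρ]
      have htΓ : P.map t Γ = ⊤ := by
        rw [hΓ, P.map_inf, ht1, ht2, top_inf_eq]
      have etq : t ≫ prod.lift (prod.fst ≫ prod.fst) prod.snd = cm ρ := by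
        rw [htdef]; ext <;> simp
      calc ρ = P.ex (cm ρ) ⊤ := (P.ex_cm_top cob cm hc_top hc_univ hc_full ρ).symm
        _ = P.ex (cm ρ) (P.map t Γ) := by rw [htΓ]
        _ ≤ P.ex (cm ρ) (P.map t (P.map (prod.lift (prod.fst ≫ prod.fst) prod.snd)
              (P.ex (prod.lift (prod.fst ≫ prod.fst) prod.snd) Γ))) :=
            P.ex_mono _ (P.map_mono t (P.unit _ _))
        _ = P.ex (cm ρ) (P.map (cm ρ)
              (P.ex (prod.lift (prod.fst ≫ prod.fst) prod.snd) Γ)) := by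
            rw [P.map_map, etq]
        _ ≤ P.ex (prod.lift (prod.fst ≫ prod.fst) prod.snd) Γ := (P.ex_adj _ _ _).2 le_rfl
  -- comp ψ φ = ρ'
  have hcomp2 : P.comp (P.map (prod.map c (𝟙 A)) ρ) (P.map (prod.map (𝟙 A) c) ρ) = ρ' := by
    show P.ex (prod.lift (prod.fst ≫ prod.fst) prod.snd)
        (P.map prod.fst (P.map (prod.map c (𝟙 A)) ρ) ⊓
         P.map (prod.lift (prod.fst ≫ prod.snd) prod.snd) (P.map (prod.map (𝟙 A) c) ρ)) = ρ'
    set Γ : P.obj ((cob α ⨯ A) ⨯ cob α) :=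
      P.map prod.fst (P.map (prod.map c (𝟙 A)) ρ) ⊓
        P.map (prod.lift (prod.fst ≫ prod.snd) prod.snd) (P.map (prod.map (𝟙 A) c) ρ) with hΓ
    apply le_antisymm
    · refine (P.ex_adj _ _ _).2 ?_
      rw [hΓ, hφn, hψn, hρ'n]
      simp only [P.map_map]
      have e1 : (prod.fst : (cob α ⨯ A) ⨯ cob α ⟶ cob α ⨯ A) ≫
            prod.lift (prod.fst ≫ c) prod.snd
          = prod.lift (prod.fst ≫ prod.fst ≫ c) (prod.fst ≫ prod.snd) := by ext <;> simp
      have e2 : (prod.lift (prod.fst ≫ prod.snd) prod.snd :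
            (cob α ⨯ A) ⨯ cob α ⟶ A ⨯ cob α) ≫ prod.lift prod.fst (prod.snd ≫ c)
          = prod.lift (prod.fst ≫ prod.snd) (prod.snd ≫ c) := by ext <;> simp
      have e3 : (prod.lift (prod.fst ≫ prod.fst) prod.snd :
            (cob α ⨯ A) ⨯ cob α ⟶ cob α ⨯ cob α) ≫ prod.lift (prod.fst ≫ c) (prod.snd ≫ c)
          = prod.lift (prod.fst ≫ prod.fst ≫ c) (prod.snd ≫ c) := by ext <;> simp
      rw [e1, e2, e3]
      exact P.trans3 ht _ _ _
    · set t' : cob α ⨯ cob α ⟶ (cob α ⨯ A) ⨯ cob α :=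
        prod.lift (prod.lift prod.fst (prod.fst ≫ c)) prod.snd with ht'def
      have h1 : ρ' ≤ P.map t' Γ := by
        rw [hΓ, P.map_inf]
        refine le_inf ?_ ?_
        · rw [hψn]
          simp only [P.map_map]
          have e : t' ≫ ((prod.fst : (cob α ⨯ A) ⨯ cob α ⟶ cob α ⨯ A) ≫
                prod.lift (prod.fst ≫ c) prod.snd)
              = prod.lift (prod.fst ≫ c) (prod.fst ≫ c) := by rw [ht'def]; ext <;> simp
          rw [e]
          exact le_trans (le_of_eq hρ'n) (P.refl_left hs ht _ _)
        · rw [hφn]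
          simp only [P.map_map]
          have e : t' ≫ ((prod.lift (prod.fst ≫ prod.snd) prod.snd :
                (cob α ⨯ A) ⨯ cob α ⟶ A ⨯ cob α) ≫ prod.lift prod.fst (prod.snd ≫ c))
              = prod.lift (prod.fst ≫ c) (prod.snd ≫ c) := by rw [ht'def]; ext <;> simp
          rw [e]
          exact le_of_eq hρ'n
      have et'q : t' ≫ prod.lift (prod.fst ≫ prod.fst) prod.snd = 𝟙 (cob α ⨯ cob α) := by
        rw [ht'def]; ext <;> simp
      calc ρ' ≤ P.map t' Γ := h1
        _ ≤ P.map t' (P.map (prod.lift (prod.fst ≫ prod.fst) prod.snd)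
              (P.ex (prod.lift (prod.fst ≫ prod.fst) prod.snd) Γ)) :=
            P.map_mono t' (P.unit _ _)
        _ = P.ex (prod.lift (prod.fst ≫ prod.fst) prod.snd) Γ := by
            rw [P.map_map, et'q, P.map_id]
  exact ⟨⟨hrefl, hsymm, htrans⟩, P.map (prod.map (𝟙 A) c) ρ, P.map (prod.map c (𝟙 A)) ρ,
    ⟨hφ1, hφ2, hφ3, hφ4, hφ5⟩, ⟨hψ1, hψ2, hψ3, hψ4, hψ5⟩, hcomp1, hcomp2⟩
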